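/- Let w be a Galerkin solution. Then for every s ≥ −k₀, Im ∫₀^L w(s,x)·conj(∂_s w(s,x)) dx = ‖∂_x w(s,·)‖² − ‖w(s,·)‖_{L⁴}⁴ + Re ∫₀^L f(x)·conj(w(s,x)) dx − μ Im ∫₀^L v(s)(x)·conj(w(s,x)) dx. -/

import Mathlib

open MeasureTheory Finset

/-- The `L²` norm `(∫₀^L ‖g x‖² dx)^{1/2}` of a function on the circle `AddCircle L`
(recall that the standard measure on `AddCircle L` has total mass `L`). -/
noncomputable def l2norm (L : ℝ) [Fact (0 < L)] (g : AddCircle L → ℂ) : ℝ :=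
  Real.sqrt (∫ x : AddCircle L, ‖g x‖ ^ 2)

/-- The trigonometric polynomial `x ↦ ∑_{|k| ≤ N} c k · e^{2πikx/L}` on `AddCircle L`. -/
noncomputable def trigSum (L : ℝ) (N : ℕ) (c : ℤ → ℂ) : AddCircle L → ℂ :=
  fun x => ∑ k ∈ Finset.Icc (-(N : ℤ)) (N : ℤ), c k * fourier k x

/-- The low-mode Fourier projection `P_N g = ∑_{|k| ≤ N} ĝ(k) e^{2πikx/L}`. -/
noncomputable def lowProj (L : ℝ) [Fact (0 < L)] (N : ℕ) (g : AddCircle L → ℂ) :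
    AddCircle L → ℂ :=
  trigSum L N (fun k => fourierCoeff g k)

/-- A Galerkin solution of the feedback-controlled damped driven NLS:
`w(s,x) = ∑_{|k| ≤ n} a_k(s) e^{2πikx/L}` with differentiable coefficients on `[-k₀, ∞)`,
satisfying `i ∂ₛ w + ∂ₓ² w + P_n(|w|² w) + iγ w = P_n f - iμ (P_m w - v(s))`
with `w(-k₀, ·) = 0`, where the datum `v(s) = ∑_{|k| ≤ m} (vc k s) e^{2πikx/L}` is a
continuously differentiable map into trigonometric polynomials of degree ≤ m with
finite `X`-norm `sup_s ‖v(s)‖ + sup_s ‖∂ₛ v(s)‖`. -/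
structure GalerkinSolution (L : ℝ) [Fact (0 < L)] where
  /-- damping parameter -/
  γ : ℝ
  /-- feedback (relaxation) parameter -/
  μ : ℝ
  hγ : 0 < γ
  hμ : 0 < μ
  /-- number of observed low modes -/
  m : ℕ
  /-- Galerkin truncation level -/
  n : ℕ
  hmn : m ≤ n
  /-- the forcing term, in `L²(AddCircle L)` -/
  f : AddCircle L → ℂ
  hf : MeasureTheory.MemLp f 2 MeasureTheory.volume
  /-- the initial time is `-k₀` -/
  k₀ : ℝ
  /-- the Fourier coefficients of the datum `v` -/
  vc : ℤ → ℝ → ℂ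
  hvc : ∀ k : ℤ, ContDiff ℝ 1 (vc k)
  /-- `|v|_X < ∞` -/
  hvX : ∃ C : ℝ, ∀ s : ℝ,
    l2norm L (trigSum L m (fun k => vc k s))
      + l2norm L (trigSum L m (fun k => deriv (vc k) s)) ≤ C
  /-- the coefficients of the Galerkin solution -/
  a : ℤ → ℝ → ℂ
  /-- the time derivatives of the coefficients -/
  a' : ℤ → ℝ → ℂ
  ha : ∀ (k : ℤ) (s : ℝ), -k₀ ≤ s → HasDerivWithinAt (a k) (a' k s) (Set.Ici (-k₀)) s
  hinit : ∀ k : ℤ, a k (-k₀) = 0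
  heq : ∀ (s : ℝ), -k₀ ≤ s → ∀ x : AddCircle L,
    Complex.I * trigSum L n (fun k => a' k s) x
      + trigSum L n (fun k => Complex.ofReal (-((2 * Real.pi * (k : ℝ) / L) ^ 2)) * a k s) x
      + lowProj L n (fun y => Complex.ofReal (‖trigSum L n (fun k => a k s) y‖ ^ 2)
          * trigSum L n (fun k => a k s) y) x
      + Complex.I * (γ : ℂ) * trigSum L n (fun k => a k s) x
      = lowProj L n f x
        - Complex.I * (μ : ℂ) * (lowProj L m (trigSum L n (fun k => a k s)) x
            - trigSum L m (fun k => vc k s) x)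

namespace GalerkinSolution

variable {L : ℝ} [Fact (0 < L)]

/-- the solution `w(s, ·)` -/
noncomputable def w (G : GalerkinSolution L) (s : ℝ) : AddCircle L → ℂ :=
  trigSum L G.n (fun k => G.a k s)

/-- the time derivative `∂ₛ w(s, ·)` -/
noncomputable def ws (G : GalerkinSolution L) (s : ℝ) : AddCircle L → ℂ :=
  trigSum L G.n (fun k => G.a' k s)

/-- the spatial derivative `∂ₓ w(s, ·)` -/
noncomputable def wx (G : GalerkinSolution L) (s : ℝ) : AddCircle L → ℂ :=
  trigSum L G.n (fun k => Complex.ofReal (2 * Real.pi * (k : ℝ) / L) * Complex.I * G.a k s)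

/-- the second spatial derivative `∂ₓ² w(s, ·)` -/
noncomputable def wxx (G : GalerkinSolution L) (s : ℝ) : AddCircle L → ℂ :=
  trigSum L G.n (fun k => Complex.ofReal (-((2 * Real.pi * (k : ℝ) / L) ^ 2)) * G.a k s)

/-- the datum `v(s)` -/
noncomputable def v (G : GalerkinSolution L) (s : ℝ) : AddCircle L → ℂ :=
  trigSum L G.m (fun k => G.vc k s)

/-- the time derivative `∂ₛ v(s)` of the datum -/
noncomputable def vs (G : GalerkinSolution L) (s : ℝ) : AddCircle L → ℂ :=
  trigSum L G.m (fun k => deriv (G.vc k) s)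

/-- the norm `|v|_X = sup_s ‖v(s)‖ + sup_s ‖∂ₛ v(s)‖` of the datum -/
noncomputable def normX (G : GalerkinSolution L) : ℝ :=
  (⨆ s : ℝ, l2norm L (G.v s)) + ⨆ s : ℝ, l2norm L (G.vs s)

end GalerkinSolution

open scoped ComplexConjugate

set_option linter.unusedSectionVars false
set_option linter.unusedVariables false

section Helpers

variable {L : ℝ} [hL : Fact (0 < L)]

lemma continuous_trigSum (N : ℕ) (c : ℤ → ℂ) : Continuous (trigSum L N c) := by
  unfold trigSum
  exact continuous_finset_sum _ fun k _ => continuous_const.mul (fourier k).continuous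

lemma integrable_of_continuous {μ : Measure (AddCircle L)} [IsFiniteMeasure μ]
    {g : AddCircle L → ℂ} (hg : Continuous g) : Integrable g μ :=
  hg.integrable_of_hasCompactSupport (isClosed_tsupport g).isCompact

lemma integral_fourier_haar (j : ℤ) :
    ∫ x : AddCircle L, fourier j x ∂AddCircle.haarAddCircle = if j = 0 then 1 else 0 := by
  split_ifs with h
  · subst h; simp [fourier_zero]
  · exact integral_eq_zero_of_add_right_eq_neg (fourier_add_half_inv_index h hL.out)

lemma integral_mul_conj_fourier {g : AddCircle L → ℂ} (hg : Integrable g) (k : ℤ) :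
    ∫ x : AddCircle L, g x * conj (fourier k x) = (L : ℂ) * fourierCoeff g k := by
  have h1 : ∀ x : AddCircle L, g x * conj (fourier k x) = fourier (-k) x • g x := by
    intro x; rw [← fourier_neg, smul_eq_mul, mul_comm]
  simp_rw [h1]
  have h2 : fourierCoeff g k
      = ∫ t : AddCircle L, fourier (-k) t • g t ∂AddCircle.haarAddCircle := rfl
  rw [AddCircle.volume_eq_smul_haarAddCircle, integral_smul_measure,
    ENNReal.toReal_ofReal hL.out.le, h2, Complex.real_smul]

lemma integral_mul_conj_trigSum {g : AddCircle L → ℂ} (hg : Integrable g)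
    (M : ℕ) (b : ℤ → ℂ) :
    ∫ x : AddCircle L, g x * conj (trigSum L M b x)
      = (L : ℂ) * ∑ k ∈ Icc (-(M : ℤ)) (M : ℤ), fourierCoeff g k * conj (b k) := by
  have h1 : ∀ x : AddCircle L, g x * conj (trigSum L M b x)
      = ∑ k ∈ Icc (-(M : ℤ)) (M : ℤ), conj (b k) * (g x * conj (fourier k x)) := by
    intro x
    rw [trigSum, map_sum, Finset.mul_sum]
    exact Finset.sum_congr rfl fun k _ => by rw [map_mul]; ring
  simp_rw [h1]
  rw [integral_finset_sum]
  · rw [Finset.mul_sum]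
    refine Finset.sum_congr rfl fun k _ => ?_
    rw [integral_const_mul, integral_mul_conj_fourier hg]
    ring
  · intro k _
    have hb : Integrable (fun x : AddCircle L => conj (fourier k x) * g x) := by
      refine hg.bdd_mul (c := 1) ?_ (Filter.Eventually.of_forall fun x => ?_)
      · exact (Complex.continuous_conj.comp (map_continuous (fourier k))).aestronglyMeasurable
      · simp only [Function.comp, RCLike.norm_conj]
        rw [fourier_apply]
        exact le_of_eq (Circle.norm_coe _)
    exact ((hb.const_mul _).congr (Filter.Eventually.of_forall fun x => by ring))

lemma fourierCoeff_trigSum (N : ℕ) (c : ℤ → ℂ) (k : ℤ) :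
    fourierCoeff (trigSum L N c) k = if k ∈ Icc (-(N : ℤ)) (N : ℤ) then c k else 0 := by
  have h0 : fourierCoeff (trigSum L N c) k
      = ∫ t : AddCircle L, fourier (-k) t • trigSum L N c t ∂AddCircle.haarAddCircle := rfl
  have h1 : ∀ t : AddCircle L, fourier (-k) t • trigSum L N c t
      = ∑ l ∈ Icc (-(N : ℤ)) (N : ℤ), c l * fourier (l + -k) t := by
    intro t
    rw [smul_eq_mul, trigSum, Finset.mul_sum]
    refine Finset.sum_congr rfl fun l _ => ?_
    rw [fourier_add]
    ring
  rw [h0]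
  simp_rw [h1]
  rw [integral_finset_sum]
  · simp_rw [integral_const_mul, integral_fourier_haar]
    have : ∀ l : ℤ, l + -k = 0 ↔ l = k := fun l => by omega
    simp_rw [this, mul_ite, mul_one, mul_zero]
    exact Finset.sum_ite_eq' _ _ _
  · intro l _
    exact (integrable_of_continuous (map_continuous (fourier (l + -k)))).const_mul _

lemma integral_trigSum_mul_conj_trigSum {N M : ℕ} (h : N ≤ M) (c b : ℤ → ℂ) :
    ∫ x : AddCircle L, trigSum L N c x * conj (trigSum L M b x)
      = (L : ℂ) * ∑ k ∈ Icc (-(N : ℤ)) (N : ℤ), c k * conj (b k) := by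
  rw [integral_mul_conj_trigSum (integrable_of_continuous (continuous_trigSum N c)) M b]
  congr 1
  simp_rw [fourierCoeff_trigSum, ite_mul, zero_mul]
  rw [Finset.sum_ite_mem]
  congr 1
  rw [Finset.inter_eq_right]
  exact Finset.Icc_subset_Icc (by exact_mod_cast neg_le_neg (Nat.cast_le.mpr h))
    (by exact_mod_cast Nat.cast_le.mpr h)

lemma integral_lowProj_mul_conj_trigSum {g : AddCircle L → ℂ} (hg : Integrable g)
    (N : ℕ) (b : ℤ → ℂ) :
    ∫ x : AddCircle L, lowProj L N g x * conj (trigSum L N b x)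
      = ∫ x : AddCircle L, g x * conj (trigSum L N b x) := by
  rw [integral_mul_conj_trigSum hg, lowProj, integral_trigSum_mul_conj_trigSum le_rfl]

lemma mul_conj_eq_ofReal (z : ℂ) : z * conj z = ((‖z‖ ^ 2 : ℝ) : ℂ) := by
  rw [Complex.mul_conj, Complex.normSq_eq_norm_sq]

lemma l2norm_trigSum_sq (N : ℕ) (c : ℤ → ℂ) :
    (l2norm L (trigSum L N c)) ^ 2 = L * ∑ k ∈ Icc (-(N : ℤ)) (N : ℤ), ‖c k‖ ^ 2 := by
  have h1 := integral_trigSum_mul_conj_trigSum (L := L) (le_refl N) c c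
  simp_rw [mul_conj_eq_ofReal] at h1
  have h1' : ((∫ x : AddCircle L, (‖trigSum L N c x‖ ^ 2 : ℝ) : ℝ) : ℂ)
      = (L : ℂ) * ∑ k ∈ Icc (-(N : ℤ)) (N : ℤ), ((‖c k‖ ^ 2 : ℝ) : ℂ) :=
    (integral_ofReal).symm.trans h1
  have key : ∫ x : AddCircle L, (‖trigSum L N c x‖ ^ 2 : ℝ)
      = L * ∑ k ∈ Icc (-(N : ℤ)) (N : ℤ), ‖c k‖ ^ 2 := by
    exact_mod_cast h1'
  rw [l2norm, Real.sq_sqrt (integral_nonneg fun x => sq_nonneg _), key]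

end Helpers

/-- for a Galerkin solution `w` and every `s ≥ -k₀`,
`Im ∫ w(s) conj(∂ₛ w(s)) = ‖∂ₓ w(s)‖² - ‖w(s)‖_{L⁴}⁴ + Re ∫ f conj(w(s))
  - μ Im ∫ v(s) conj(w(s))`. -/



theorem galerkin_real_part_identity (L : ℝ) [Fact (0 < L)] (G : GalerkinSolution L)
    (s : ℝ) (hs : -G.k₀ ≤ s) :
    (∫ x : AddCircle L, G.w s x * (starRingEnd ℂ) (G.ws s x)).im
      = (l2norm L (G.wx s)) ^ 2 - (∫ x : AddCircle L, ‖G.w s x‖ ^ 4)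
        + (∫ x : AddCircle L, G.f x * (starRingEnd ℂ) (G.w s x)).re
        - G.μ * (∫ x : AddCircle L, G.v s x * (starRingEnd ℂ) (G.w s x)).im := by
  classical
  simp only [GalerkinSolution.w, GalerkinSolution.ws, GalerkinSolution.wx, GalerkinSolution.v]
  have hcw : Continuous (trigSum L G.n (fun k => G.a k s)) := continuous_trigSum _ _
  have hcws : Continuous (trigSum L G.n (fun k => G.a' k s)) := continuous_trigSum _ _
  have hcwxx : Continuous (trigSum L G.n (fun k =>
      Complex.ofReal (-((2 * Real.pi * (k : ℝ) / L) ^ 2)) * G.a k s)) := continuous_trigSum _ _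
  have hcv : Continuous (trigSum L G.m (fun k => G.vc k s)) := continuous_trigSum _ _
  have hch : Continuous (fun y => Complex.ofReal (‖trigSum L G.n (fun k => G.a k s) y‖ ^ 2)
      * trigSum L G.n (fun k => G.a k s) y) :=
    (Complex.continuous_ofReal.comp ((hcw.norm).pow 2)).mul hcw
  have hcPnh : Continuous (lowProj L G.n (fun y =>
      Complex.ofReal (‖trigSum L G.n (fun k => G.a k s) y‖ ^ 2)
      * trigSum L G.n (fun k => G.a k s) y)) := continuous_trigSum _ _
  have hcPnf : Continuous (lowProj L G.n G.f) := continuous_trigSum _ _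
  have hcPmw : Continuous (lowProj L G.m (trigSum L G.n (fun k => G.a k s))) :=
    continuous_trigSum _ _
  have hcconj : Continuous (fun x => conj (trigSum L G.n (fun k => G.a k s) x)) :=
    Complex.continuous_conj.comp hcw
  have hint : ∀ {p : AddCircle L → ℂ}, Continuous p →
      Integrable (fun x => p x * conj (trigSum L G.n (fun k => G.a k s) x)) volume :=
    fun hp => integrable_of_continuous (hp.mul hcconj)
  -- the pointwise equation, multiplied by `conj w` and integrated
  have hEq : (∫ x : AddCircle L,
        (Complex.I * trigSum L G.n (fun k => G.a' k s) x
          + trigSum L G.n (fun k => Complex.ofReal (-((2 * Real.pi * (k : ℝ) / L) ^ 2)) * G.a k s) x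
          + lowProj L G.n (fun y => Complex.ofReal (‖trigSum L G.n (fun k => G.a k s) y‖ ^ 2)
              * trigSum L G.n (fun k => G.a k s) y) x
          + Complex.I * (G.γ : ℂ) * trigSum L G.n (fun k => G.a k s) x)
          * conj (trigSum L G.n (fun k => G.a k s) x))
      = ∫ x : AddCircle L,
        (lowProj L G.n G.f x
          - Complex.I * (G.μ : ℂ) * (lowProj L G.m (trigSum L G.n (fun k => G.a k s)) x
              - trigSum L G.m (fun k => G.vc k s) x))
          * conj (trigSum L G.n (fun k => G.a k s) x) := by
    refine integral_congr_ae (Filter.Eventually.of_forall fun x => ?_)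
    exact congrArg (fun z => z * conj (trigSum L G.n (fun k => G.a k s) x)) (G.heq s hs x)
  have hsplitL : (fun x : AddCircle L =>
        (Complex.I * trigSum L G.n (fun k => G.a' k s) x
          + trigSum L G.n (fun k => Complex.ofReal (-((2 * Real.pi * (k : ℝ) / L) ^ 2)) * G.a k s) x
          + lowProj L G.n (fun y => Complex.ofReal (‖trigSum L G.n (fun k => G.a k s) y‖ ^ 2)
              * trigSum L G.n (fun k => G.a k s) y) x
          + Complex.I * (G.γ : ℂ) * trigSum L G.n (fun k => G.a k s) x)
          * conj (trigSum L G.n (fun k => G.a k s) x))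
      = fun x : AddCircle L =>
        Complex.I * (trigSum L G.n (fun k => G.a' k s) x * conj (trigSum L G.n (fun k => G.a k s) x))
        + trigSum L G.n (fun k => Complex.ofReal (-((2 * Real.pi * (k : ℝ) / L) ^ 2)) * G.a k s) x
            * conj (trigSum L G.n (fun k => G.a k s) x)
        + lowProj L G.n (fun y => Complex.ofReal (‖trigSum L G.n (fun k => G.a k s) y‖ ^ 2)
              * trigSum L G.n (fun k => G.a k s) y) x
            * conj (trigSum L G.n (fun k => G.a k s) x)
        + Complex.I * (G.γ : ℂ)
            * (trigSum L G.n (fun k => G.a k s) x * conj (trigSum L G.n (fun k => G.a k s) x)) := by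
    funext x; ring
  have hsplitR : (fun x : AddCircle L =>
        (lowProj L G.n G.f x
          - Complex.I * (G.μ : ℂ) * (lowProj L G.m (trigSum L G.n (fun k => G.a k s)) x
              - trigSum L G.m (fun k => G.vc k s) x))
          * conj (trigSum L G.n (fun k => G.a k s) x))
      = fun x : AddCircle L =>
        lowProj L G.n G.f x * conj (trigSum L G.n (fun k => G.a k s) x)
        - Complex.I * (G.μ : ℂ)
            * (lowProj L G.m (trigSum L G.n (fun k => G.a k s)) x
                  * conj (trigSum L G.n (fun k => G.a k s) x)
                - trigSum L G.m (fun k => G.vc k s) x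
                  * conj (trigSum L G.n (fun k => G.a k s) x)) := by
    funext x; ring
  rw [hsplitL, hsplitR] at hEq
  have int1 : Integrable (fun x : AddCircle L =>
      Complex.I * (trigSum L G.n (fun k => G.a' k s) x
        * conj (trigSum L G.n (fun k => G.a k s) x))) volume := (hint hcws).const_mul _
  have int2 : Integrable (fun x : AddCircle L =>
      trigSum L G.n (fun k => Complex.ofReal (-((2 * Real.pi * (k : ℝ) / L) ^ 2)) * G.a k s) x
        * conj (trigSum L G.n (fun k => G.a k s) x)) volume := hint hcwxx
  have int3 : Integrable (fun x : AddCircle L =>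
      lowProj L G.n (fun y => Complex.ofReal (‖trigSum L G.n (fun k => G.a k s) y‖ ^ 2)
          * trigSum L G.n (fun k => G.a k s) y) x
        * conj (trigSum L G.n (fun k => G.a k s) x)) volume := hint hcPnh
  have int4 : Integrable (fun x : AddCircle L =>
      Complex.I * (G.γ : ℂ) * (trigSum L G.n (fun k => G.a k s) x
        * conj (trigSum L G.n (fun k => G.a k s) x))) volume := (hint hcw).const_mul _
  have int5 : Integrable (fun x : AddCircle L =>
      lowProj L G.n G.f x * conj (trigSum L G.n (fun k => G.a k s) x)) volume := hint hcPnf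
  have int6 : Integrable (fun x : AddCircle L =>
      lowProj L G.m (trigSum L G.n (fun k => G.a k s)) x
        * conj (trigSum L G.n (fun k => G.a k s) x)) volume := hint hcPmw
  have int7 : Integrable (fun x : AddCircle L =>
      trigSum L G.m (fun k => G.vc k s) x
        * conj (trigSum L G.n (fun k => G.a k s) x)) volume := hint hcv
  have int12 : Integrable (fun x : AddCircle L =>
      Complex.I * (trigSum L G.n (fun k => G.a' k s) x
        * conj (trigSum L G.n (fun k => G.a k s) x))
      + trigSum L G.n (fun k => Complex.ofReal (-((2 * Real.pi * (k : ℝ) / L) ^ 2)) * G.a k s) x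
        * conj (trigSum L G.n (fun k => G.a k s) x)) volume := by exact int1.add int2
  have int123 : Integrable (fun x : AddCircle L =>
      Complex.I * (trigSum L G.n (fun k => G.a' k s) x
        * conj (trigSum L G.n (fun k => G.a k s) x))
      + trigSum L G.n (fun k => Complex.ofReal (-((2 * Real.pi * (k : ℝ) / L) ^ 2)) * G.a k s) x
        * conj (trigSum L G.n (fun k => G.a k s) x)
      + lowProj L G.n (fun y => Complex.ofReal (‖trigSum L G.n (fun k => G.a k s) y‖ ^ 2)
          * trigSum L G.n (fun k => G.a k s) y) x
        * conj (trigSum L G.n (fun k => G.a k s) x)) volume := by exact int12.add int3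
  have int67 : Integrable (fun x : AddCircle L =>
      lowProj L G.m (trigSum L G.n (fun k => G.a k s)) x
        * conj (trigSum L G.n (fun k => G.a k s) x)
      - trigSum L G.m (fun k => G.vc k s) x
        * conj (trigSum L G.n (fun k => G.a k s) x)) volume := by exact int6.sub int7
  have int67c : Integrable (fun x : AddCircle L =>
      Complex.I * (G.μ : ℂ) * (lowProj L G.m (trigSum L G.n (fun k => G.a k s)) x
        * conj (trigSum L G.n (fun k => G.a k s) x)
      - trigSum L G.m (fun k => G.vc k s) x
        * conj (trigSum L G.n (fun k => G.a k s) x))) volume := by exact int67.const_mul _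
  rw [integral_add int123 int4, integral_add int12 int3,
    integral_add int1 int2, integral_const_mul Complex.I,
    integral_sub int5 int67c, integral_const_mul (Complex.I * (G.μ : ℂ)),
    integral_sub int6 int7, integral_const_mul (Complex.I * (G.γ : ℂ))] at hEq
  -- closed forms for each integral
  have hIA := integral_trigSum_mul_conj_trigSum (L := L) (le_refl G.n)
    (fun k => G.a' k s) (fun k => G.a k s)
  have hIB := integral_trigSum_mul_conj_trigSum (L := L) (le_refl G.n)
    (fun k => Complex.ofReal (-((2 * Real.pi * (k : ℝ) / L) ^ 2)) * G.a k s) (fun k => G.a k s)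
  have hIW := integral_trigSum_mul_conj_trigSum (L := L) (le_refl G.n)
    (fun k => G.a k s) (fun k => G.a k s)
  have hIC := integral_lowProj_mul_conj_trigSum (integrable_of_continuous hch) G.n
    (fun k => G.a k s)
  have hIC2 : (∫ x : AddCircle L,
        (fun y => Complex.ofReal (‖trigSum L G.n (fun k => G.a k s) y‖ ^ 2)
            * trigSum L G.n (fun k => G.a k s) y) x
          * conj (trigSum L G.n (fun k => G.a k s) x))
      = (((∫ x : AddCircle L, ‖trigSum L G.n (fun k => G.a k s) x‖ ^ 4 : ℝ)) : ℂ) := by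
    have hpt : ∀ x : AddCircle L,
        Complex.ofReal (‖trigSum L G.n (fun k => G.a k s) x‖ ^ 2)
            * trigSum L G.n (fun k => G.a k s) x
            * conj (trigSum L G.n (fun k => G.a k s) x)
        = ((‖trigSum L G.n (fun k => G.a k s) x‖ ^ 4 : ℝ) : ℂ) := by
      intro x
      rw [mul_assoc, mul_conj_eq_ofReal]
      push_cast
      ring
    simp_rw [hpt]
    exact integral_ofReal
  have hIE := integral_lowProj_mul_conj_trigSum (G.hf.integrable one_le_two) G.n
    (fun k => G.a k s)
  have hIF : (∫ x : AddCircle L,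
        lowProj L G.m (trigSum L G.n (fun k => G.a k s)) x
          * conj (trigSum L G.n (fun k => G.a k s) x))
      = (L : ℂ) * ∑ k ∈ Icc (-(G.m : ℤ)) (G.m : ℤ), G.a k s * conj (G.a k s) := by
    rw [lowProj, integral_trigSum_mul_conj_trigSum G.hmn]
    congr 1
    refine Finset.sum_congr rfl fun k hk => ?_
    congr 1
    rw [fourierCoeff_trigSum, if_pos]
    exact Finset.Icc_subset_Icc (by exact_mod_cast neg_le_neg (Nat.cast_le.mpr G.hmn))
      (by exact_mod_cast Nat.cast_le.mpr G.hmn) hk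
  rw [hIA, hIB, hIW, hIC, hIC2, hIE, hIF] at hEq
  -- real forms for the real-valued sums
  have hWreal : ((L : ℂ) * ∑ k ∈ Icc (-(G.n : ℤ)) (G.n : ℤ), G.a k s * conj (G.a k s))
      = (((L * ∑ k ∈ Icc (-(G.n : ℤ)) (G.n : ℤ), ‖G.a k s‖ ^ 2 : ℝ)) : ℂ) := by
    simp_rw [mul_conj_eq_ofReal]
    push_cast
    ring
  have hFreal : ((L : ℂ) * ∑ k ∈ Icc (-(G.m : ℤ)) (G.m : ℤ), G.a k s * conj (G.a k s))
      = (((L * ∑ k ∈ Icc (-(G.m : ℤ)) (G.m : ℤ), ‖G.a k s‖ ^ 2 : ℝ)) : ℂ) := by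
    simp_rw [mul_conj_eq_ofReal]
    push_cast
    ring
  have hBreal : ((L : ℂ) * ∑ k ∈ Icc (-(G.n : ℤ)) (G.n : ℤ),
        (Complex.ofReal (-((2 * Real.pi * (k : ℝ) / L) ^ 2)) * G.a k s) * conj (G.a k s))
      = -((((l2norm L (trigSum L G.n (fun k =>
          Complex.ofReal (2 * Real.pi * (k : ℝ) / L) * Complex.I * G.a k s))) ^ 2 : ℝ)) : ℂ) := by
    rw [l2norm_trigSum_sq]
    have hterm : ∀ k : ℤ,
        (Complex.ofReal (-((2 * Real.pi * (k : ℝ) / L) ^ 2)) * G.a k s) * conj (G.a k s)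
        = -(((‖Complex.ofReal (2 * Real.pi * (k : ℝ) / L) * Complex.I * G.a k s‖ ^ 2 : ℝ)) : ℂ) := by
      intro k
      have hnrm : ‖Complex.ofReal (2 * Real.pi * (k : ℝ) / L) * Complex.I * G.a k s‖ ^ 2
          = (2 * Real.pi * (k : ℝ) / L) ^ 2 * ‖G.a k s‖ ^ 2 := by
        rw [norm_mul, norm_mul, Complex.norm_I, Complex.norm_real, mul_one, mul_pow, Real.norm_eq_abs,
          sq_abs]
      rw [mul_assoc, mul_conj_eq_ofReal, hnrm]
      push_cast
      ring
    simp_rw [hterm]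
    rw [Finset.sum_neg_distrib, mul_neg, neg_inj, Complex.ofReal_mul, Complex.ofReal_sum]
  rw [hWreal, hFreal, hBreal] at hEq
  -- relate the goal's LHS to the integral appearing in hEq
  have hconjA : (∫ x : AddCircle L, trigSum L G.n (fun k => G.a k s) x
        * conj (trigSum L G.n (fun k => G.a' k s) x))
      = conj (∫ x : AddCircle L, trigSum L G.n (fun k => G.a' k s) x
        * conj (trigSum L G.n (fun k => G.a k s) x)) := by
    rw [← integral_conj]
    refine integral_congr_ae (Filter.Eventually.of_forall fun x => ?_)
    simp only [map_mul, Complex.conj_conj]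
    ring
  rw [hconjA, hIA]
  have hre := congrArg Complex.re hEq
  simp only [Complex.add_re, Complex.sub_re, Complex.add_im, Complex.sub_im, Complex.mul_re,
    Complex.mul_im, Complex.I_re, Complex.I_im, Complex.ofReal_re, Complex.ofReal_im,
    Complex.neg_re, Complex.neg_im, Complex.conj_im, Complex.conj_re, zero_mul, one_mul,
    zero_sub, sub_zero, mul_zero, zero_add, add_zero, neg_zero, neg_neg, mul_one, mul_neg,
    neg_mul] at hre ⊢
  linarith [hre]
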